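/- Let n ≥ 1 and let Ω be an open subset of ℝⁿ. Then γ(Ω)² ≤ 4·Λ(Ω), i.e. the square of the isoperimetric (Cheeger) constant of Ω is at most four times the fundamental Dirichlet–Laplace constant of Ω. -/

import Mathlib

open MeasureTheory Metric Set Filter
open scoped ENNReal Topology

noncomputable section

/-- Smooth compactly supported test function in an open set `Ω`. -/
def TestFun {n : ℕ} (Ω : Set (EuclideanSpace ℝ (Fin n)))
    (u : EuclideanSpace ℝ (Fin n) → ℝ) : Prop :=
  ContDiff ℝ (⊤ : ℕ∞) u ∧ HasCompactSupport u ∧ tsupport u ⊆ Ω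

/-- The fundamental Dirichlet–Laplace constant
`Λ(Ω) = inf { ∫_Ω |∇u|² / ∫_Ω u² : u ∈ C_0^∞(Ω), u ≠ 0 }`. -/
def Lambda {n : ℕ} (Ω : Set (EuclideanSpace ℝ (Fin n))) : ℝ :=
  sInf {r : ℝ | ∃ u : EuclideanSpace ℝ (Fin n) → ℝ, TestFun Ω u ∧ u ≠ 0 ∧
    r = (∫ x in Ω, ‖fderiv ℝ u x‖ ^ 2) / ∫ x in Ω, (u x) ^ 2}

/-- The Cheeger (isoperimetric) constant
`γ(Ω) = inf { ∫_Ω |∇u| / ∫_Ω |u| : u ∈ C_0^∞(Ω), u ≠ 0 }`. -/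
def cheegerConst {n : ℕ} (Ω : Set (EuclideanSpace ℝ (Fin n))) : ℝ :=
  sInf {r : ℝ | ∃ u : EuclideanSpace ℝ (Fin n) → ℝ, TestFun Ω u ∧ u ≠ 0 ∧
    r = (∫ x in Ω, ‖fderiv ℝ u x‖) / ∫ x in Ω, |u x|}

/-- `γ(Ω)² ≤ 4·Λ(Ω)` for every open `Ω ⊆ ℝⁿ`, `n ≥ 1`. -/
theorem stmt_0 (n : ℕ) (hn : 1 ≤ n) (Ω : Set (EuclideanSpace ℝ (Fin n)))
    (hΩ : IsOpen Ω) :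
    cheegerConst Ω ^ 2 ≤ 4 * Lambda Ω := by
  set C : Set ℝ := {r : ℝ | ∃ u : EuclideanSpace ℝ (Fin n) → ℝ, TestFun Ω u ∧ u ≠ 0 ∧
    r = (∫ x in Ω, ‖fderiv ℝ u x‖) / ∫ x in Ω, |u x|} with hC
  set L : Set ℝ := {r : ℝ | ∃ u : EuclideanSpace ℝ (Fin n) → ℝ, TestFun Ω u ∧ u ≠ 0 ∧
    r = (∫ x in Ω, ‖fderiv ℝ u x‖ ^ 2) / ∫ x in Ω, (u x) ^ 2} with hL
  have hΩm : MeasurableSet Ω := hΩ.measurableSet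
  have hCnonneg : ∀ r ∈ C, 0 ≤ r := by
    rintro r ⟨u, hu, hu0, rfl⟩
    apply div_nonneg
    · exact setIntegral_nonneg hΩm fun x _ => norm_nonneg _
    · exact setIntegral_nonneg hΩm fun x _ => abs_nonneg _
  have hCbdd : BddBelow C := ⟨0, hCnonneg⟩
  have hγ0 : 0 ≤ cheegerConst Ω := Real.sInf_nonneg hCnonneg
  by_cases hne : ∃ u : EuclideanSpace ℝ (Fin n) → ℝ, TestFun Ω u ∧ u ≠ 0
  · -- main case
    have key : ∀ r ∈ L, cheegerConst Ω ^ 2 / 4 ≤ r := by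
      rintro r ⟨u, ⟨husm, hucs, husp⟩, hu0, rfl⟩
      set A := ∫ x in Ω, ‖fderiv ℝ u x‖ ^ 2 with hA
      set B := ∫ x in Ω, (u x) ^ 2 with hB
      have hud : Differentiable ℝ u := husm.differentiable (by simp)
      have hfc : Continuous (fderiv ℝ u) := husm.continuous_fderiv (by simp)
      have hfcs : HasCompactSupport (fderiv ℝ u) := hucs.fderiv ℝ
      -- integrabilities
      have hu2cs : HasCompactSupport (fun x => (u x) ^ 2) := by
        have := hucs.comp_left (g := fun t : ℝ => t ^ 2) (by simp)
        simpa [Function.comp_def] using this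
      have hiu2 : IntegrableOn (fun x => (u x) ^ 2) Ω := by
        exact ((husm.continuous.pow 2).integrable_of_hasCompactSupport hu2cs).integrableOn
      have hf2cs : HasCompactSupport (fun x => ‖fderiv ℝ u x‖ ^ 2) := by
        have := hfcs.comp_left (g := fun L : EuclideanSpace ℝ (Fin n) →L[ℝ] ℝ => ‖L‖ ^ 2)
          (by simp)
        simpa [Function.comp_def] using this
      have hif2 : IntegrableOn (fun x => ‖fderiv ℝ u x‖ ^ 2) Ω := by
        exact ((hfc.norm.pow 2).integrable_of_hasCompactSupport hf2cs).integrableOn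
      -- positivity of B
      have hBpos : 0 < B := by
        have hzero : ∀ x ∉ Ω, (u x) ^ 2 = 0 := by
          intro x hx
          have : u x = 0 := image_eq_zero_of_notMem_tsupport (fun h => hx (husp h))
          simp [this]
        rw [hB, setIntegral_eq_integral_of_forall_compl_eq_zero fun x hx => hzero x hx]
        refine (integral_pos_iff_support_of_nonneg (fun x => sq_nonneg _) ?_).2 ?_
        · exact hiu2.integrable_of_forall_notMem_eq_zero (fun x hx => hzero x hx) |>.congr
            (by rfl)
        · have : Function.support (fun x => (u x) ^ 2) = Function.support u := by
            ext x; simp [Function.mem_support, pow_eq_zero_iff]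
          rw [this]
          have hopen : IsOpen (Function.support u) := husm.continuous.isOpen_support
          have hne' : (Function.support u).Nonempty := Function.support_nonempty_iff.2 hu0
          exact hopen.measure_pos _ hne'
      have hA0 : 0 ≤ A := setIntegral_nonneg hΩm fun x _ => sq_nonneg _
      set R := A / B with hR
      have hR0 : 0 ≤ R := div_nonneg hA0 hBpos.le
      -- v = u^2 is a test function, nonzero
      have hvsm : ContDiff ℝ (⊤ : ℕ∞) (fun x => (u x)^2) := husm.pow 2
      have hvsupp : Function.support (fun x => (u x)^2) = Function.support u := by
        ext x; simp [Function.mem_support, pow_eq_zero_iff]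
      have hvts : tsupport (fun x => (u x)^2) = tsupport u := by
        unfold tsupport; rw [hvsupp]
      have hvcs : HasCompactSupport (fun x => (u x)^2) := by
        unfold HasCompactSupport; rw [hvts]; exact hucs
      have hv0 : (fun x => (u x)^2) ≠ 0 := by
        intro h
        apply hu0
        funext x
        have := congrFun h x
        simpa [pow_eq_zero_iff] using this
      -- fderiv of v
      have hvderiv : ∀ x, fderiv ℝ (fun y => (u y)^2) x = (2 * u x) • fderiv ℝ u x := by
        intro x
        have h1 : HasFDerivAt u (fderiv ℝ u x) x := (hud x).hasFDerivAt
        have h2 := h1.mul h1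
        have : HasFDerivAt (fun y => (u y)^2)
            (u x • fderiv ℝ u x + u x • fderiv ℝ u x) x := by
          simp only [pow_two]; exact h2
        rw [this.fderiv, two_mul, add_smul]
      have hvnorm : ∀ x, ‖fderiv ℝ (fun y => (u y)^2) x‖ = 2 * |u x| * ‖fderiv ℝ u x‖ := by
        intro x
        rw [hvderiv x, norm_smul]
        simp [abs_mul, mul_assoc]
      -- the Cheeger quotient of v
      have hmem : (∫ x in Ω, ‖fderiv ℝ (fun y => (u y)^2) x‖) / (∫ x in Ω, |(u x)^2|) ∈ C := by
        exact ⟨fun x => (u x)^2, ⟨hvsm, hvcs, hvts ▸ husp⟩, hv0, rfl⟩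
      have hγle : ∀ ε : ℝ, 0 < ε → cheegerConst Ω ≤ ε + ε⁻¹ * R := by
        intro ε hε
        have hden : (∫ x in Ω, |(u x)^2|) = B := by
          rw [hB]; congr 1; funext x; rw [abs_of_nonneg (sq_nonneg _)]
        have hbound : (∫ x in Ω, ‖fderiv ℝ (fun y => (u y)^2) x‖)
            ≤ ε * B + ε⁻¹ * A := by
          have hptwise : ∀ x ∈ Ω, ‖fderiv ℝ (fun y => (u y)^2) x‖
              ≤ ε * (u x)^2 + ε⁻¹ * ‖fderiv ℝ u x‖^2 := by
            intro x _
            rw [hvnorm x]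
            set a := |u x| with ha
            set b := ‖fderiv ℝ u x‖ with hb
            have h3 : (u x)^2 = a^2 := (sq_abs _).symm
            rw [h3, ← sub_nonneg]
            have hid : ε * a^2 + ε⁻¹ * b^2 - 2 * a * b = (ε * a - b)^2 / ε := by
              field_simp
              ring
            rw [hid]
            positivity
          calc (∫ x in Ω, ‖fderiv ℝ (fun y => (u y)^2) x‖)
              ≤ ∫ x in Ω, (ε * (u x)^2 + ε⁻¹ * ‖fderiv ℝ u x‖^2) := by
                apply setIntegral_mono_on _ _ hΩm hptwise
                · have hc : Continuous (fun x => ‖fderiv ℝ (fun y => (u y)^2) x‖) :=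
                    ((hvsm.continuous_fderiv (by simp)).norm)
                  exact (hc.integrable_of_hasCompactSupport (hvcs.fderiv ℝ).norm).integrableOn
                · exact (hiu2.const_mul ε).add (hif2.const_mul ε⁻¹)
            _ = ε * B + ε⁻¹ * A := by
                rw [integral_add (hiu2.const_mul ε) (hif2.const_mul ε⁻¹),
                  integral_const_mul, integral_const_mul]
        have hq : (∫ x in Ω, ‖fderiv ℝ (fun y => (u y)^2) x‖) / (∫ x in Ω, |(u x)^2|)
            ≤ ε + ε⁻¹ * R := by
          rw [hden, div_le_iff₀ hBpos, hR]
          calc (∫ x in Ω, ‖fderiv ℝ (fun y => (u y)^2) x‖) ≤ ε * B + ε⁻¹ * A := hbound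
            _ = (ε + ε⁻¹ * (A / B)) * B := by field_simp
        exact le_trans (csInf_le hCbdd hmem) hq
      -- conclude γ² ≤ 4R
      rcases eq_or_lt_of_le hR0 with hReq | hRpos
      · have hRz : R = 0 := hReq.symm
        have hγz : cheegerConst Ω ≤ 0 := by
          by_contra h
          push_neg at h
          have h2 := hγle (cheegerConst Ω / 2) (by linarith)
          rw [hRz, mul_zero, add_zero] at h2
          linarith
        have hγeq : cheegerConst Ω = 0 := le_antisymm hγz hγ0
        rw [hγeq, hRz]
        norm_num
      · have h2 := hγle (Real.sqrt R) (Real.sqrt_pos.2 hRpos)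
        have hs : Real.sqrt R * Real.sqrt R = R := Real.mul_self_sqrt hR0
        have hsp : 0 < Real.sqrt R := Real.sqrt_pos.2 hRpos
        have h3 : (Real.sqrt R)⁻¹ * R = Real.sqrt R := by
          rw [inv_mul_eq_div, div_eq_iff hsp.ne']
          exact hs.symm
        rw [h3] at h2
        nlinarith [hγ0]
    have hLne : L.Nonempty := by
      obtain ⟨u, hu, hu0⟩ := hne
      exact ⟨_, u, hu, hu0, rfl⟩
    have : cheegerConst Ω ^ 2 / 4 ≤ Lambda Ω := le_csInf hLne key
    have hLeq : Lambda Ω = sInf L := rfl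
    linarith
  · -- both sets empty
    have hCempty : C = ∅ := by
      ext r; simp only [hC, mem_setOf_eq, mem_empty_iff_false, iff_false]
      rintro ⟨u, hu, hu0, _⟩; exact hne ⟨u, hu, hu0⟩
    have hLempty : L = ∅ := by
      ext r; simp only [hL, mem_setOf_eq, mem_empty_iff_false, iff_false]
      rintro ⟨u, hu, hu0, _⟩; exact hne ⟨u, hu, hu0⟩
    have h1 : cheegerConst Ω = 0 := by
      show sInf C = 0; rw [hCempty]; exact Real.sInf_empty
    have h2 : Lambda Ω = 0 := by
      show sInf L = 0; rw [hLempty]; exact Real.sInf_empty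
    rw [h1, h2]; norm_num
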